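/- Assume in addition the feasibility condition ∑_{i=1}^m ∫_0^T μ_{i,t} dt > 0. Then every positive solution (P₊, P₋) of the Riccati system satisfies P_{−,0} < 1. -/

import Mathlib

open MeasureTheory Set

lemma max_sq_diff_le (a b : ℝ) : |max a 0 ^ 2 - max b 0 ^ 2| ≤ (|a| + |b|) * |a - b| := by
  have h1 : |max a 0 - max b 0| ≤ |a - b| := abs_max_sub_max_le_abs a b 0
  have ha : max a 0 ≤ |a| := max_le (le_abs_self a) (abs_nonneg a)
  have hb : max b 0 ≤ |b| := max_le (le_abs_self b) (abs_nonneg b)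
  have h2 : |max a 0 + max b 0| ≤ |a| + |b| := by
    rw [abs_of_nonneg (add_nonneg (le_max_right a 0) (le_max_right b 0))]
    exact add_le_add ha hb
  calc |max a 0 ^ 2 - max b 0 ^ 2| = |(max a 0 + max b 0) * (max a 0 - max b 0)| := by ring_nf
    _ = |max a 0 + max b 0| * |max a 0 - max b 0| := abs_mul _ _
    _ ≤ (|a| + |b|) * |a - b| :=
        mul_le_mul h2 h1 (abs_nonneg _) (add_nonneg (abs_nonneg _) (abs_nonneg _))

lemma integrand_le (P Q x : ℝ) (hP : 0 ≤ P) (hQ : 0 ≤ Q) :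
    P * ((max (1 - x) 0) ^ 2 - 1 + 2 * x) + Q * (max (-(1 - x)) 0) ^ 2 ≤ (P + Q) * x ^ 2 := by
  rcases le_total x 1 with h | h
  · rw [max_eq_left (by linarith), max_eq_right (by linarith)]
    nlinarith [mul_nonneg hQ (sq_nonneg x)]
  · rw [max_eq_right (by linarith), max_eq_left (by linarith : (0:ℝ) ≤ -(1-x))]
    nlinarith [mul_nonneg hP (sq_nonneg (x - 1)), mul_nonneg hQ (by linarith : (0:ℝ) ≤ 2*x - 1)]

lemma integrand_ge (c P Q x : ℝ) (hc : 0 ≤ c) (hcP : c ≤ P) (hcQ : c ≤ Q) :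
    c * x ^ 2 ≤ P * ((max (1 - x) 0) ^ 2 - 1 + 2 * x) + Q * (max (-(1 - x)) 0) ^ 2 := by
  rcases le_total x 1 with h | h
  · rw [max_eq_left (by linarith), max_eq_right (by linarith)]
    nlinarith [mul_le_mul_of_nonneg_right hcP (sq_nonneg x)]
  · rw [max_eq_right (by linarith), max_eq_left (by linarith : (0:ℝ) ≤ -(1-x))]
    nlinarith [mul_le_mul_of_nonneg_right hcQ (sq_nonneg (x-1)),
      mul_le_mul_of_nonneg_right hcP (by linarith : (0:ℝ) ≤ 2*x - 1)]

lemma quad_lb (a b t : ℝ) (ha : 0 < a) : -(b ^ 2 / a) ≤ a * t ^ 2 - 2 * b * t := by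
  have hb : b ^ 2 / a * a = b ^ 2 := div_mul_cancel₀ _ ha.ne'
  nlinarith [sq_nonneg (a * t - b), ha]

lemma Fdiff_bound (P Q xq xv : ℝ) (hP : 0 ≤ P) (hQ : 0 ≤ Q) :
    |(P * ((max (1 - xq) 0) ^ 2 - 1 + 2 * xq) + Q * (max (-(1 - xq)) 0) ^ 2)
      - (P * ((max (1 - xv) 0) ^ 2 - 1 + 2 * xv) + Q * (max (-(1 - xv)) 0) ^ 2)|
    ≤ (P + Q) * (4 + |xq| + |xv|) * |xq - xv| := by
  set a := 1 - xq with hadef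
  set b := 1 - xv with hbdef
  have hD : |a - b| = |xq - xv| := by rw [hadef, hbdef]; rw [show (1-xq) - (1-xv) = -(xq - xv) by ring, abs_neg]
  have h1 : |max a 0 ^ 2 - max b 0 ^ 2| ≤ (|a| + |b|) * |xq - xv| := hD ▸ max_sq_diff_le a b
  have h2 : |max (-a) 0 ^ 2 - max (-b) 0 ^ 2| ≤ (|a| + |b|) * |xq - xv| := by
    have h := max_sq_diff_le (-a) (-b)
    have he : |-a - -b| = |xq - xv| := by
      rw [show -a - -b = -(a - b) by ring, abs_neg, hD]
    rw [he, abs_neg, abs_neg] at h; exact h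
  have ha1 : |a| ≤ 1 + |xq| := by
    rw [hadef]; calc |1 - xq| ≤ |(1:ℝ)| + |xq| := abs_sub _ _
      _ = 1 + |xq| := by norm_num
  have hb1 : |b| ≤ 1 + |xv| := by
    rw [hbdef]; calc |1 - xv| ≤ |(1:ℝ)| + |xv| := abs_sub _ _
      _ = 1 + |xv| := by norm_num
  have hexpr : (P * ((max (1 - xq) 0) ^ 2 - 1 + 2 * xq) + Q * (max (-(1 - xq)) 0) ^ 2)
      - (P * ((max (1 - xv) 0) ^ 2 - 1 + 2 * xv) + Q * (max (-(1 - xv)) 0) ^ 2)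
      = P * (max a 0 ^ 2 - max b 0 ^ 2) + Q * (max (-a) 0 ^ 2 - max (-b) 0 ^ 2)
        + 2 * P * (xq - xv) := by rw [hadef, hbdef]; ring
  rw [hexpr]
  have habs : |P * (max a 0 ^ 2 - max b 0 ^ 2) + Q * (max (-a) 0 ^ 2 - max (-b) 0 ^ 2)
        + 2 * P * (xq - xv)|
      ≤ P * |max a 0 ^ 2 - max b 0 ^ 2| + Q * |max (-a) 0 ^ 2 - max (-b) 0 ^ 2|
        + 2 * P * |xq - xv| := by
    calc _ ≤ |P * (max a 0 ^ 2 - max b 0 ^ 2) + Q * (max (-a) 0 ^ 2 - max (-b) 0 ^ 2)|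
          + |2 * P * (xq - xv)| := abs_add_le _ _
      _ ≤ |P * (max a 0 ^ 2 - max b 0 ^ 2)| + |Q * (max (-a) 0 ^ 2 - max (-b) 0 ^ 2)|
          + |2 * P * (xq - xv)| := by gcongr; exact abs_add_le _ _
      _ = _ := by rw [abs_mul, abs_mul, abs_mul, abs_of_nonneg hP, abs_of_nonneg hQ,
            abs_of_nonneg (by linarith : (0:ℝ) ≤ 2 * P)]
  refine habs.trans ?_
  have hDn : (0:ℝ) ≤ |xq - xv| := abs_nonneg _
  have e1 : P * |max a 0 ^ 2 - max b 0 ^ 2| ≤ P * ((|a| + |b|) * |xq - xv|) :=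
    mul_le_mul_of_nonneg_left h1 hP
  have e2 : Q * |max (-a) 0 ^ 2 - max (-b) 0 ^ 2| ≤ Q * ((|a| + |b|) * |xq - xv|) :=
    mul_le_mul_of_nonneg_left h2 hQ
  nlinarith [mul_nonneg hQ hDn, mul_nonneg hP hDn,
    mul_le_mul_of_nonneg_right (add_le_add ha1 hb1) hDn,
    mul_nonneg (mul_nonneg hP hDn) (abs_nonneg xq), mul_nonneg (mul_nonneg hQ hDn) (abs_nonneg xq),
    mul_nonneg (mul_nonneg hP hDn) (abs_nonneg xv), mul_nonneg (mul_nonneg hQ hDn) (abs_nonneg xv)]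

lemma sInf_eq_iInf_rat {m : ℕ} (g : (Fin m → ℝ) → ℝ) (M : ℝ)
    (hM : ∀ v : Fin m → ℝ, (∀ i, 0 ≤ v i) → M ≤ g v)
    (happrox : ∀ v : Fin m → ℝ, (∀ i, 0 ≤ v i) → ∀ ε > 0, ∃ q : Fin m → ℚ,
      (∀ i, (0:ℚ) ≤ q i) ∧ g (fun i => (q i : ℝ)) ≤ g v + ε) :
    sInf (g '' {v : Fin m → ℝ | ∀ i, 0 ≤ v i})
      = ⨅ q : {q : Fin m → ℚ // ∀ i, 0 ≤ q i}, g (fun i => ((q.1 i : ℝ))) := by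
  haveI : Nonempty {q : Fin m → ℚ // ∀ i, 0 ≤ q i} := ⟨⟨fun _ => 0, fun _ => le_rfl⟩⟩
  have hbdd_img : BddBelow (g '' {v : Fin m → ℝ | ∀ i, 0 ≤ v i}) := by
    refine ⟨M, ?_⟩; rintro y ⟨v, hv, rfl⟩; exact hM v hv
  have hbdd_range : BddBelow (Set.range fun q : {q : Fin m → ℚ // ∀ i, 0 ≤ q i} =>
      g (fun i => ((q.1 i : ℝ)))) := by
    refine ⟨M, ?_⟩; rintro y ⟨q, rfl⟩
    exact hM _ (fun i => by exact_mod_cast q.2 i)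
  apply le_antisymm
  · exact le_ciInf fun q => csInf_le hbdd_img ⟨_, fun i => by exact_mod_cast q.2 i, rfl⟩
  · refine le_csInf ⟨g (fun _ => 0), ⟨fun _ => 0, fun i => le_rfl, rfl⟩⟩ ?_
    rintro y ⟨v, hv, rfl⟩
    refine le_of_forall_pos_le_add fun ε hε => ?_
    obtain ⟨q, hq0, hqle⟩ := happrox v hv ε hε
    exact le_trans (ciInf_le hbdd_range ⟨q, hq0⟩) hqle

lemma integrable_of_bdd {E : Type} [MeasurableSpace E] (νj : Measure E) [IsFiniteMeasure νj]
    {g : E → ℝ} (hg : Measurable g) {C : ℝ} (hC : ∀ e, |g e| ≤ C) : Integrable g νj :=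
  (integrable_const C).mono' hg.aestronglyMeasurable
    (ae_of_all _ fun e => by simpa [Real.norm_eq_abs] using hC e)

lemma sum_sq_eq {m n : ℕ} (a : Fin m → Fin n → ℝ) (v : Fin m → ℝ) :
    ∑ k, (∑ i, a i k * v i) ^ 2 = ∑ i, ∑ i2, (v i * v i2) * ∑ k, a i k * a i2 k := by
  calc ∑ k, (∑ i, a i k * v i) ^ 2
      = ∑ k, ∑ i, ∑ i2, (a i k * v i) * (a i2 k * v i2) := by
        refine Finset.sum_congr rfl fun k _ => ?_
        rw [sq, Finset.sum_mul_sum]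
    _ = ∑ i, ∑ k, ∑ i2, (a i k * v i) * (a i2 k * v i2) := Finset.sum_comm
    _ = ∑ i, ∑ i2, ∑ k, (a i k * v i) * (a i2 k * v i2) := by
        exact Finset.sum_congr rfl fun i _ => Finset.sum_comm
    _ = ∑ i, ∑ i2, (v i * v i2) * ∑ k, a i k * a i2 k := by
        refine Finset.sum_congr rfl fun i _ => Finset.sum_congr rfl fun i2 _ => ?_
        rw [Finset.mul_sum]
        exact Finset.sum_congr rfl fun k _ => by ring

lemma integral_sq_sum {E : Type} [MeasurableSpace E] (νj : Measure E) [IsFiniteMeasure νj]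
    {m : ℕ} (b : E → Fin m → ℝ) (v : Fin m → ℝ) (hb : ∀ i, Measurable fun e => b e i)
    (C : ℝ) (hC : ∀ e i, |b e i| ≤ C) :
    ∫ e, (∑ i, v i * b e i) ^ 2 ∂νj = ∑ i, ∑ k, (v i * v k) * ∫ e, b e i * b e k ∂νj := by
  have hint : ∀ i k : Fin m, Integrable (fun e => (v i * b e i) * (v k * b e k)) νj := by
    intro i k
    refine integrable_of_bdd νj (((hb i).const_mul _).mul ((hb k).const_mul _))
      (C := |v i| * C * (|v k| * C)) fun e => ?_
    rw [abs_mul, abs_mul, abs_mul]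
    have h1 := hC e i; have h2 := hC e k
    have hC0 : 0 ≤ C := (abs_nonneg _).trans h1
    gcongr
  calc ∫ e, (∑ i, v i * b e i) ^ 2 ∂νj
      = ∫ e, ∑ i, ∑ k, (v i * b e i) * (v k * b e k) ∂νj := by
        congr 1; funext e; rw [sq, Finset.sum_mul_sum]
    _ = ∑ i, ∫ e, ∑ k, (v i * b e i) * (v k * b e k) ∂νj :=
        integral_finset_sum _ fun i _ => integrable_finset_sum _ fun k _ => hint i k
    _ = ∑ i, ∑ k, ∫ e, (v i * b e i) * (v k * b e k) ∂νj :=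
        Finset.sum_congr rfl fun i _ => integral_finset_sum _ fun k _ => hint i k
    _ = ∑ i, ∑ k, (v i * v k) * ∫ e, b e i * b e k ∂νj := by
        refine Finset.sum_congr rfl fun i _ => Finset.sum_congr rfl fun k _ => ?_
        rw [← integral_const_mul]
        congr 1; funext e; ring

lemma sq_diff_le (a b : ℝ) : |a ^ 2 - b ^ 2| ≤ (|a| + |b|) * |a - b| := by
  rw [show a ^ 2 - b ^ 2 = (a + b) * (a - b) by ring, abs_mul]
  exact mul_le_mul_of_nonneg_right (abs_add_le a b) (abs_nonneg _)

lemma abs_sum_mul_le {m : ℕ} (w : Fin m → ℝ) (c : Fin m → ℝ) (C : ℝ) (hC : ∀ i, |c i| ≤ C) :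
    |∑ i, w i * c i| ≤ C * ∑ i, |w i| := by
  calc |∑ i, w i * c i| ≤ ∑ i, |w i * c i| := Finset.abs_sum_le_sum_abs _ _
    _ ≤ ∑ i, |w i| * C := Finset.sum_le_sum fun i _ => by
        rw [abs_mul]; exact mul_le_mul_of_nonneg_left (hC i) (abs_nonneg _)
    _ = C * ∑ i, |w i| := by rw [← Finset.sum_mul, mul_comm]

lemma abs_sum_mul_le' {m : ℕ} (w : Fin m → ℝ) (c : Fin m → ℝ) (C : ℝ) (hC : ∀ i, |c i| ≤ C) :
    |∑ i, c i * w i| ≤ C * ∑ i, |w i| := by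
  have h := abs_sum_mul_le w c C hC
  have he : ∑ i, c i * w i = ∑ i, w i * c i := Finset.sum_congr rfl fun i _ => mul_comm _ _
  rw [he]; exact h

lemma Fabs_bound (P Q x : ℝ) (hP : 0 ≤ P) (hQ : 0 ≤ Q) :
    |P * ((max (1 - x) 0) ^ 2 - 1 + 2 * x) + Q * (max (-(1 - x)) 0) ^ 2|
      ≤ (P + Q) * (4 + |x|) * |x| := by
  rcases le_total x 1 with h | h
  · rw [max_eq_left (by linarith), max_eq_right (by linarith)]
    have he : P * ((1 - x) ^ 2 - 1 + 2 * x) + Q * (0:ℝ) ^ 2 = P * x ^ 2 := by ring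
    rw [he, abs_of_nonneg (mul_nonneg hP (sq_nonneg x))]
    nlinarith [sq_abs x, abs_nonneg x, mul_nonneg hP (abs_nonneg x),
      mul_nonneg hQ (abs_nonneg x),
      mul_nonneg (mul_nonneg hQ (abs_nonneg x)) (abs_nonneg x)]
  · rw [max_eq_right (by linarith), max_eq_left (by linarith : (0:ℝ) ≤ -(1 - x))]
    have habs : |x| = x := abs_of_nonneg (by linarith)
    have h1 : (0:ℝ) ≤ P * (2 * x - 1) := mul_nonneg hP (by linarith)
    have h2 : (0:ℝ) ≤ Q * (x - 1) ^ 2 := mul_nonneg hQ (sq_nonneg _)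
    have hge : (0:ℝ) ≤ P * ((0:ℝ) ^ 2 - 1 + 2 * x) + Q * (-(1 - x)) ^ 2 := by nlinarith
    rw [abs_of_nonneg hge, habs]
    nlinarith [mul_nonneg hP (by nlinarith [sq_nonneg (x + 1)] : (0:ℝ) ≤ x ^ 2 + 2 * x + 1),
      mul_nonneg hQ (by linarith : (0:ℝ) ≤ 6 * x - 1)]

lemma sum_swap_mul {m ℓ' : ℕ} (c : Fin m → Fin m → ℝ) (I : Fin ℓ' → Fin m → Fin m → ℝ) :
    ∑ j, ∑ i, ∑ k, c i k * I j i k = ∑ i, ∑ k, c i k * ∑ j, I j i k := by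
  rw [Finset.sum_comm]
  refine Finset.sum_congr rfl fun i _ => ?_
  rw [Finset.sum_comm]
  refine Finset.sum_congr rfl fun k _ => ?_
  rw [Finset.mul_sum]

/-- The Hamiltonian `H₊(t, v, P₊, P₋)` of the constrained LQ problem. -/
noncomputable def Hplus {E : Type} [MeasurableSpace E] {m n ℓ : ℕ}
    (μ : ℝ → Fin m → ℝ) (σ : ℝ → Matrix (Fin m) (Fin n) ℝ)
    (ν : Fin ℓ → Measure E) (β : Fin ℓ → ℝ → E → Fin m → ℝ)
    (t : ℝ) (v : Fin m → ℝ) (Pp Pm : ℝ) : ℝ :=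
  Pp * ∑ k, (∑ i, σ t i k * v i) ^ 2 + 2 * Pp * ∑ i, μ t i * v i
    + ∑ j, ∫ e, (Pp * ((max (1 + ∑ i, v i * β j t e i) 0) ^ 2
          - 1 - 2 * ∑ i, v i * β j t e i)
        + Pm * (max (-(1 + ∑ i, v i * β j t e i)) 0) ^ 2) ∂(ν j)

/-- The Hamiltonian `H₋(t, v, P₊, P₋)` of the constrained LQ problem. -/
noncomputable def Hminus {E : Type} [MeasurableSpace E] {m n ℓ : ℕ}
    (μ : ℝ → Fin m → ℝ) (σ : ℝ → Matrix (Fin m) (Fin n) ℝ)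
    (ν : Fin ℓ → Measure E) (β : Fin ℓ → ℝ → E → Fin m → ℝ)
    (t : ℝ) (v : Fin m → ℝ) (Pp Pm : ℝ) : ℝ :=
  Pm * ∑ k, (∑ i, σ t i k * v i) ^ 2 - 2 * Pm * ∑ i, μ t i * v i
    + ∑ j, ∫ e, (Pm * ((max (1 - ∑ i, v i * β j t e i) 0) ^ 2
          - 1 + 2 * ∑ i, v i * β j t e i)
        + Pp * (max (-(1 - ∑ i, v i * β j t e i)) 0) ^ 2) ∂(ν j)

/-- `H*₊(t, P₊, P₋) = inf_{v ∈ ℝ^m₊} H₊(t, v, P₊, P₋)`. -/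
noncomputable def HstarPlus {E : Type} [MeasurableSpace E] {m n ℓ : ℕ}
    (μ : ℝ → Fin m → ℝ) (σ : ℝ → Matrix (Fin m) (Fin n) ℝ)
    (ν : Fin ℓ → Measure E) (β : Fin ℓ → ℝ → E → Fin m → ℝ)
    (t : ℝ) (Pp Pm : ℝ) : ℝ :=
  sInf ((fun v => Hplus μ σ ν β t v Pp Pm) '' {v : Fin m → ℝ | ∀ i, 0 ≤ v i})

/-- `H*₋(t, P₊, P₋) = inf_{v ∈ ℝ^m₊} H₋(t, v, P₊, P₋)`. -/
noncomputable def HstarMinus {E : Type} [MeasurableSpace E] {m n ℓ : ℕ}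
    (μ : ℝ → Fin m → ℝ) (σ : ℝ → Matrix (Fin m) (Fin n) ℝ)
    (ν : Fin ℓ → Measure E) (β : Fin ℓ → ℝ → E → Fin m → ℝ)
    (t : ℝ) (Pp Pm : ℝ) : ℝ :=
  sInf ((fun v => Hminus μ σ ν β t v Pp Pm) '' {v : Fin m → ℝ | ∀ i, 0 ≤ v i})

/-- `Σ_t = σ_t σ_tᵀ + ∑_j ∫_E β_{j,t}(e) β_{j,t}(e)ᵀ ν_j(de)`, defined entrywise. -/
noncomputable def SigmaMat {E : Type} [MeasurableSpace E] {m n ℓ : ℕ}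
    (σ : ℝ → Matrix (Fin m) (Fin n) ℝ) (ν : Fin ℓ → Measure E)
    (β : Fin ℓ → ℝ → E → Fin m → ℝ) (t : ℝ) : Matrix (Fin m) (Fin m) ℝ :=
  Matrix.of fun i k => (∑ j', σ t i j' * σ t k j') + ∑ j, ∫ e, β j t e i * β j t e k ∂(ν j)

/-- A pair of continuous positive functions `(P₊, P₋)` on `[0,T]` solving the Riccati
system `P_{±,t} = 1 + ∫_t^T H*_±(s, P_{+,s}, P_{−,s}) ds`. -/
def IsPositiveRiccatiSolution {E : Type} [MeasurableSpace E] {m n ℓ : ℕ}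
    (μ : ℝ → Fin m → ℝ) (σ : ℝ → Matrix (Fin m) (Fin n) ℝ)
    (ν : Fin ℓ → Measure E) (β : Fin ℓ → ℝ → E → Fin m → ℝ)
    (T : ℝ) (Pp Pm : ℝ → ℝ) : Prop :=
  ContinuousOn Pp (Icc 0 T) ∧ ContinuousOn Pm (Icc 0 T) ∧
  (∀ t ∈ Icc (0:ℝ) T, 0 < Pp t ∧ 0 < Pm t) ∧
  (∀ t ∈ Icc (0:ℝ) T, Pp t = 1 + ∫ s in t..T, HstarPlus μ σ ν β s (Pp s) (Pm s)) ∧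
  (∀ t ∈ Icc (0:ℝ) T, Pm t = 1 + ∫ s in t..T, HstarMinus μ σ ν β s (Pp s) (Pm s))

set_option maxHeartbeats 2000000 in
/-- under the feasibility condition `∑_i ∫_0^T μ_{i,t} dt > 0`, every positive
solution of the Riccati system satisfies `P_{−,0} < 1`. -/
theorem stmt4 {E : Type} [MeasurableSpace E] {m n ℓ : ℕ}
    (hm : 0 < m) (hn : 0 < n) (hl : 0 < ℓ)
    (T : ℝ) (hT : 0 < T)
    (μ : ℝ → Fin m → ℝ) (σ : ℝ → Matrix (Fin m) (Fin n) ℝ)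
    (ν : Fin ℓ → Measure E) [∀ j, IsFiniteMeasure (ν j)]
    (β : Fin ℓ → ℝ → E → Fin m → ℝ)
    (hμmeas : Measurable μ) (hμbd : ∃ C, ∀ t ∈ Icc (0:ℝ) T, ∀ i, |μ t i| ≤ C)
    (hσmeas : ∀ i k, Measurable fun t => σ t i k)
    (hσbd : ∃ C, ∀ t ∈ Icc (0:ℝ) T, ∀ i k, |σ t i k| ≤ C)
    (hβmeas : ∀ j, Measurable (Function.uncurry (β j)))
    (hβbd : ∃ C, ∀ j, ∀ t ∈ Icc (0:ℝ) T, ∀ e i, |β j t e i| ≤ C)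
    (hβgt : ∀ j, ∀ t ∈ Icc (0:ℝ) T, ∀ e i, -1 < β j t e i)
    (δ : ℝ) (hδ : 0 < δ)
    (hell : ∀ t ∈ Icc (0:ℝ) T, ∀ v : Fin m → ℝ,
      δ * ∑ i, v i ^ 2 ≤ ∑ i, ∑ k, v i * SigmaMat σ ν β t i k * v k)
    (hfeas : 0 < ∑ i, ∫ t in (0:ℝ)..T, μ t i)
    (Pp Pm : ℝ → ℝ)
    (hsol : IsPositiveRiccatiSolution μ σ ν β T Pp Pm) :
    Pm 0 < 1 := by
  classical
  obtain ⟨hPpc, hPmc, hpos, _hPpeq, hPmeq⟩ := hsol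
  obtain ⟨Cμ₀, hCμ₀⟩ := hμbd
  obtain ⟨Cσ₀, hCσ₀⟩ := hσbd
  obtain ⟨Cβ₀, hCβ₀⟩ := hβbd
  set Cμ : ℝ := max Cμ₀ 0 with hCμdef
  set Cσ : ℝ := max Cσ₀ 0 with hCσdef
  set Cβ : ℝ := max Cβ₀ 0 with hCβdef
  have hCμ : ∀ t ∈ Icc (0:ℝ) T, ∀ i, |μ t i| ≤ Cμ :=
    fun t ht i => (hCμ₀ t ht i).trans (le_max_left _ _)
  have hCσ : ∀ t ∈ Icc (0:ℝ) T, ∀ i k, |σ t i k| ≤ Cσ :=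
    fun t ht i k => (hCσ₀ t ht i k).trans (le_max_left _ _)
  have hCβ : ∀ j, ∀ t ∈ Icc (0:ℝ) T, ∀ e i, |β j t e i| ≤ Cβ :=
    fun j t ht e i => (hCβ₀ j t ht e i).trans (le_max_left _ _)
  have hCμ0 : 0 ≤ Cμ := le_max_right _ _
  have hCσ0 : 0 ≤ Cσ := le_max_right _ _
  have hCβ0 : 0 ≤ Cβ := le_max_right _ _
  have h0T : (0:ℝ) ∈ Icc (0:ℝ) T := ⟨le_rfl, hT.le⟩
  obtain ⟨CPp, hCPp⟩ := isCompact_Icc.exists_bound_of_continuousOn hPpc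
  obtain ⟨CPm, hCPm⟩ := isCompact_Icc.exists_bound_of_continuousOn hPmc
  set CP : ℝ := max (max CPp CPm) 1 with hCPdef
  have hCP1 : (1:ℝ) ≤ CP := le_max_right _ _
  have hCP0 : (0:ℝ) ≤ CP := zero_le_one.trans hCP1
  have hPpCP : ∀ s ∈ Icc (0:ℝ) T, Pp s ≤ CP := fun s hs => by
    have := hCPp s hs
    rw [Real.norm_eq_abs] at this
    exact (le_abs_self _).trans (this.trans ((le_max_left _ _).trans (le_max_left _ _)))
  have hPmCP : ∀ s ∈ Icc (0:ℝ) T, Pm s ≤ CP := fun s hs => by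
    have := hCPm s hs
    rw [Real.norm_eq_abs] at this
    exact (le_abs_self _).trans (this.trans ((le_max_right _ _).trans (le_max_left _ _)))
  obtain ⟨s₁, hs₁, hmin₁⟩ := isCompact_Icc.exists_isMinOn ⟨0, h0T⟩ hPpc
  obtain ⟨s₀, hs₀, hmin₀⟩ := isCompact_Icc.exists_isMinOn ⟨0, h0T⟩ hPmc
  set cP : ℝ := min (Pp s₁) (Pm s₀) with hcPdef
  have hcP0 : 0 < cP := lt_min (hpos s₁ hs₁).1 (hpos s₀ hs₀).2
  have hcPp : ∀ s ∈ Icc (0:ℝ) T, cP ≤ Pp s :=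
    fun s hs => (min_le_left _ _).trans (isMinOn_iff.mp hmin₁ s hs)
  have hcPm : ∀ s ∈ Icc (0:ℝ) T, cP ≤ Pm s :=
    fun s hs => (min_le_right _ _).trans (isMinOn_iff.mp hmin₀ s hs)
  have hcPCP : cP ≤ CP := (hcPm 0 h0T).trans (hPmCP 0 h0T)
  set Sν : ℝ := ∑ j, (ν j Set.univ).toReal with hSνdef
  have hSν : ∀ j, (ν j Set.univ).toReal ≤ Sν :=
    fun j => Finset.single_le_sum (f := fun j => (ν j Set.univ).toReal)
      (fun j _ => ENNReal.toReal_nonneg) (Finset.mem_univ j)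
  have hSν0 : 0 ≤ Sν := Finset.sum_nonneg fun j _ => ENNReal.toReal_nonneg
  -- measurability of β sections
  have hβe : ∀ j (t : ℝ) i, Measurable fun e => β j t e i := fun j t i =>
    (measurable_pi_apply i).comp ((hβmeas j).comp measurable_prodMk_left)
  have hxmeas : ∀ j (t : ℝ) (v : Fin m → ℝ), Measurable fun e => ∑ i, v i * β j t e i :=
    fun j t v => Finset.measurable_sum _ fun i _ => ((hβe j t i).const_mul (v i))
  have hxbd : ∀ j, ∀ s ∈ Icc (0:ℝ) T, ∀ (v : Fin m → ℝ) (e : E),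
      |∑ i, v i * β j s e i| ≤ Cβ * ∑ i, |v i| :=
    fun j s hs v e => abs_sum_mul_le v _ Cβ (fun i => hCβ j s hs e i)
  -- integrand measurability and integrability
  have hFmeas : ∀ j (s a b : ℝ) (v : Fin m → ℝ), Measurable fun e =>
      b * ((max (1 - ∑ i, v i * β j s e i) 0) ^ 2 - 1 + 2 * ∑ i, v i * β j s e i)
        + a * (max (-(1 - ∑ i, v i * β j s e i)) 0) ^ 2 := by
    intro j s a b v
    have hx := hxmeas j s v
    exact (((((measurable_const.sub hx).max measurable_const).pow_const 2).sub
        measurable_const).add (hx.const_mul 2)).const_mul b |>.add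
      ((((measurable_const.sub hx).neg.max measurable_const).pow_const 2).const_mul a)
  have hFint : ∀ j, ∀ s ∈ Icc (0:ℝ) T, ∀ v : Fin m → ℝ,
      Integrable (fun e =>
        Pm s * ((max (1 - ∑ i, v i * β j s e i) 0) ^ 2 - 1 + 2 * ∑ i, v i * β j s e i)
          + Pp s * (max (-(1 - ∑ i, v i * β j s e i)) 0) ^ 2) (ν j) := by
    intro j s hs v
    refine integrable_of_bdd (ν j) (hFmeas j s (Pp s) (Pm s) v)
      (C := (Pm s + Pp s) * (4 + Cβ * ∑ i, |v i|) * (Cβ * ∑ i, |v i|)) fun e => ?_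
    refine (Fabs_bound (Pm s) (Pp s) _ (hpos s hs).2.le (hpos s hs).1.le).trans ?_
    have hxb := hxbd j s hs v e
    have hsum0 : 0 ≤ ∑ i, |v i| := Finset.sum_nonneg fun i _ => abs_nonneg _
    have h4 : 0 ≤ Pm s + Pp s := add_nonneg (hpos s hs).2.le (hpos s hs).1.le
    have h5 : (0:ℝ) ≤ 4 + Cβ * ∑ i, |v i| := by positivity
    exact mul_le_mul
      (mul_le_mul_of_nonneg_left (by linarith : 4 + |∑ i, v i * β j s e i| ≤ 4 + Cβ * ∑ i, |v i|) h4)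
      hxb (abs_nonneg _) (mul_nonneg h4 h5)
  have hx2int : ∀ j, ∀ s ∈ Icc (0:ℝ) T, ∀ v : Fin m → ℝ,
      Integrable (fun e => (∑ i, v i * β j s e i) ^ 2) (ν j) := by
    intro j s hs v
    refine integrable_of_bdd (ν j) ((hxmeas j s v).pow_const 2)
      (C := (Cβ * ∑ i, |v i|) ^ 2) fun e => ?_
    rw [abs_pow]
    exact pow_le_pow_left₀ (abs_nonneg _) (hxbd j s hs v e) 2
  -- the quadratic form identity
  have hquad : ∀ s ∈ Icc (0:ℝ) T, ∀ v : Fin m → ℝ,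
      (∑ k, (∑ i, σ s i k * v i) ^ 2) + ∑ j, ∫ e, (∑ i, v i * β j s e i) ^ 2 ∂ν j
        = ∑ i, ∑ k, v i * SigmaMat σ ν β s i k * v k := by
    intro s hs v
    have h1 : ∀ j : Fin ℓ, ∫ e, (∑ i, v i * β j s e i) ^ 2 ∂ν j
        = ∑ i, ∑ k, (v i * v k) * ∫ e, β j s e i * β j s e k ∂ν j := fun j =>
      integral_sq_sum (ν j) (fun e => β j s e) v (hβe j s) Cβ (fun e i => hCβ j s hs e i)
    rw [Finset.sum_congr rfl fun j _ => h1 j, sum_swap_mul, sum_sq_eq (a := σ s)]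
    have hR : ∑ i, ∑ k, v i * SigmaMat σ ν β s i k * v k
        = (∑ i, ∑ k, (v i * v k) * ∑ j', σ s i j' * σ s k j')
          + ∑ i, ∑ k, (v i * v k) * ∑ j, ∫ e, β j s e i * β j s e k ∂ν j := by
      simp only [SigmaMat, Matrix.of_apply]
      rw [← Finset.sum_add_distrib]
      refine Finset.sum_congr rfl fun i _ => ?_
      rw [← Finset.sum_add_distrib]
      refine Finset.sum_congr rfl fun k _ => ?_
      ring
    rw [hR]
  -- lower bound for Hminus
  set M : ℝ := m * ((CP * Cμ) ^ 2 / (cP * δ)) with hMdef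
  have hM0 : 0 ≤ M := by positivity
  have hlow : ∀ s ∈ Icc (0:ℝ) T, ∀ v : Fin m → ℝ,
      -M ≤ Hminus μ σ ν β s v (Pp s) (Pm s) := by
    intro s hs v
    have hint1 : ∀ j : Fin ℓ, cP * ∫ e, (∑ i, v i * β j s e i) ^ 2 ∂ν j
        ≤ ∫ e, (Pm s * ((max (1 - ∑ i, v i * β j s e i) 0) ^ 2 - 1 + 2 * ∑ i, v i * β j s e i)
          + Pp s * (max (-(1 - ∑ i, v i * β j s e i)) 0) ^ 2) ∂ν j := by
      intro j
      rw [← integral_const_mul]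
      refine integral_mono ((hx2int j s hs v).const_mul cP) (hFint j s hs v) fun e => ?_
      exact integrand_ge cP (Pm s) (Pp s) _ hcP0.le (hcPm s hs) (hcPp s hs)
    have hq1 : cP * ∑ k, (∑ i, σ s i k * v i) ^ 2 ≤ Pm s * ∑ k, (∑ i, σ s i k * v i) ^ 2 :=
      mul_le_mul_of_nonneg_right (hcPm s hs)
        (Finset.sum_nonneg fun k _ => sq_nonneg _)
    have hsum1 : ∑ j, cP * ∫ e, (∑ i, v i * β j s e i) ^ 2 ∂ν j
        ≤ ∑ j, ∫ e, (Pm s * ((max (1 - ∑ i, v i * β j s e i) 0) ^ 2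
            - 1 + 2 * ∑ i, v i * β j s e i)
          + Pp s * (max (-(1 - ∑ i, v i * β j s e i)) 0) ^ 2) ∂ν j :=
      Finset.sum_le_sum fun j _ => hint1 j
    have hell' : cP * (δ * ∑ i, v i ^ 2)
        ≤ cP * ((∑ k, (∑ i, σ s i k * v i) ^ 2)
            + ∑ j, ∫ e, (∑ i, v i * β j s e i) ^ 2 ∂ν j) := by
      rw [hquad s hs v]
      exact mul_le_mul_of_nonneg_left (hell s hs v) hcP0.le
    have hμv : |∑ i, μ s i * v i| ≤ Cμ * ∑ i, |v i| :=
      abs_sum_mul_le' v _ Cμ (fun i => hCμ s hs i)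
    have hμv2 : Pm s * ∑ i, μ s i * v i ≤ CP * (Cμ * ∑ i, |v i|) := by
      have h1 : Pm s * ∑ i, μ s i * v i ≤ Pm s * |∑ i, μ s i * v i| :=
        mul_le_mul_of_nonneg_left (le_abs_self _) (hpos s hs).2.le
      refine h1.trans (mul_le_mul (hPmCP s hs) hμv (abs_nonneg _) hCP0)
    have hper : ∀ i : Fin m, -((CP * Cμ) ^ 2 / (cP * δ))
        ≤ cP * δ * |v i| ^ 2 - 2 * (CP * Cμ) * |v i| :=
      fun i => quad_lb (cP * δ) (CP * Cμ) (|v i|) (by positivity)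
    have hsumq : -M ≤ cP * δ * ∑ i, v i ^ 2 - 2 * (CP * Cμ) * ∑ i, |v i| := by
      have h1 : ∑ i : Fin m, -((CP * Cμ) ^ 2 / (cP * δ))
          ≤ ∑ i, (cP * δ * |v i| ^ 2 - 2 * (CP * Cμ) * |v i|) :=
        Finset.sum_le_sum fun i _ => hper i
      have h2 : ∑ i : Fin m, -((CP * Cμ) ^ 2 / (cP * δ)) = -M := by
        rw [Finset.sum_const, Finset.card_univ, Fintype.card_fin, nsmul_eq_mul, hMdef]
        ring
      have h3 : ∑ i, (cP * δ * |v i| ^ 2 - 2 * (CP * Cμ) * |v i|)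
          = cP * δ * ∑ i, v i ^ 2 - 2 * (CP * Cμ) * ∑ i, |v i| := by
        rw [Finset.sum_sub_distrib, ← Finset.mul_sum, ← Finset.mul_sum]
        congr 2
        exact Finset.sum_congr rfl fun i _ => by rw [sq_abs]
      rw [← h2, ← h3]
      exact h1
    have hmulsum : ∑ j : Fin ℓ, cP * ∫ e, (∑ i, v i * β j s e i) ^ 2 ∂ν j
        = cP * ∑ j : Fin ℓ, ∫ e, (∑ i, v i * β j s e i) ^ 2 ∂ν j :=
      (Finset.mul_sum _ _ _).symm
    rw [hmulsum] at hsum1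
    simp only [Hminus]
    linarith [hsum1, hq1, hell', hμv2, hsumq]
  -- nonneg rational vectors
  have hbdd : ∀ s ∈ Icc (0:ℝ) T,
      BddBelow ((fun v => Hminus μ σ ν β s v (Pp s) (Pm s)) '' {v : Fin m → ℝ | ∀ i, 0 ≤ v i}) := by
    intro s hs
    exact ⟨-M, by rintro y ⟨v, hv, rfl⟩; exact hlow s hs v⟩
  have hH0 : ∀ s : ℝ, Hminus μ σ ν β s 0 (Pp s) (Pm s) = 0 := by
    intro s
    simp [Hminus]
  have hf_le : ∀ s ∈ Icc (0:ℝ) T, ∀ v : Fin m → ℝ, (∀ i, 0 ≤ v i) →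
      HstarMinus μ σ ν β s (Pp s) (Pm s) ≤ Hminus μ σ ν β s v (Pp s) (Pm s) := by
    intro s hs v hv
    exact csInf_le (hbdd s hs) ⟨v, hv, rfl⟩
  have hf_le0 : ∀ s ∈ Icc (0:ℝ) T, HstarMinus μ σ ν β s (Pp s) (Pm s) ≤ 0 := by
    intro s hs
    have := hf_le s hs 0 (fun i => le_rfl)
    rw [hH0 s] at this
    exact this
  have hf_ge : ∀ s ∈ Icc (0:ℝ) T, -M ≤ HstarMinus μ σ ν β s (Pp s) (Pm s) := by
    intro s hs
    refine le_csInf ⟨_, ⟨0, fun i => le_rfl, rfl⟩⟩ ?_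
    rintro y ⟨v, hv, rfl⟩
    exact hlow s hs v
  -- rational approximation of the infimum
  have happrox : ∀ s ∈ Icc (0:ℝ) T, ∀ v : Fin m → ℝ, (∀ i, 0 ≤ v i) → ∀ ε > 0,
      ∃ q : Fin m → ℚ, (∀ i, 0 ≤ q i) ∧
        Hminus μ σ ν β s (fun i => (q i : ℝ)) (Pp s) (Pm s)
          ≤ Hminus μ σ ν β s v (Pp s) (Pm s) + ε := by
    intro s hs v hv ε hε
    have hvsum0 : 0 ≤ ∑ i, v i := Finset.sum_nonneg fun i _ => hv i
    obtain ⟨R, hRdef⟩ : ∃ R : ℝ, R = (∑ i, v i) + m := ⟨_, rfl⟩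
    have hR0 : 0 ≤ R := by rw [hRdef]; positivity
    obtain ⟨L, hLdef⟩ : ∃ L : ℝ,
        L = 2 * CP * n * Cσ ^ 2 * R + 2 * CP * Cμ + 2 * CP * (4 + 2 * Cβ * R) * Cβ * Sν :=
      ⟨_, rfl⟩
    have hL0 : 0 ≤ L := by rw [hLdef]; positivity
    have hLm1 : (0:ℝ) < L * m + 1 := by positivity
    obtain ⟨θ, hθdef⟩ : ∃ θ : ℝ, θ = min 1 (ε / (L * m + 1)) := ⟨_, rfl⟩
    have hθ0 : 0 < θ := hθdef ▸ lt_min one_pos (div_pos hε hLm1)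
    have hθ1 : θ ≤ 1 := hθdef ▸ min_le_left _ _
    choose q hq1 hq2 using fun i => exists_rat_btwn (lt_add_of_pos_right (v i) hθ0)
    refine ⟨q, fun i => ?_, ?_⟩
    · exact_mod_cast (hv i).trans (hq1 i).le
    obtain ⟨w, hwdef⟩ : ∃ w : Fin m → ℝ, w = fun i => (q i : ℝ) := ⟨_, rfl⟩
    have hwq : ∀ i, w i = (q i : ℝ) := fun i => by rw [hwdef]
    have hw0 : ∀ i, 0 ≤ w i := fun i => (hwq i) ▸ ((hv i).trans (hq1 i).le)
    have hwv : ∀ i, |w i - v i| ≤ θ := fun i => by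
      rw [hwq i, abs_of_nonneg (by linarith [hq1 i] : 0 ≤ ((q i : ℝ)) - v i)]
      linarith [hq2 i]
    obtain ⟨D, hDdef⟩ : ∃ D : ℝ, D = ∑ i, |w i - v i| := ⟨_, rfl⟩
    have hD0 : 0 ≤ D := hDdef ▸ Finset.sum_nonneg fun i _ => abs_nonneg _
    have hD : D ≤ m * θ := by
      rw [hDdef]
      calc ∑ i, |w i - v i| ≤ ∑ _i : Fin m, θ := Finset.sum_le_sum fun i _ => hwv i
        _ = m * θ := by rw [Finset.sum_const, Finset.card_univ, Fintype.card_fin, nsmul_eq_mul]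
    have hsumv : ∑ i, |v i| ≤ R := by
      have h0 : ∑ i, |v i| = ∑ i, v i := Finset.sum_congr rfl fun i _ => abs_of_nonneg (hv i)
      rw [h0, hRdef]
      have : (0:ℝ) ≤ m := Nat.cast_nonneg m
      linarith
    have hsumw : ∑ i, |w i| ≤ R := by
      have h1 : ∑ i, |w i| = ∑ i, w i := Finset.sum_congr rfl fun i _ => abs_of_nonneg (hw0 i)
      have h2 : ∑ i, w i ≤ ∑ i, (v i + 1) :=
        Finset.sum_le_sum fun i _ => by rw [hwq i]; linarith [hq2 i, hθ1]
      rw [h1, hRdef]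
      rw [Finset.sum_add_distrib, Finset.sum_const, Finset.card_univ, Fintype.card_fin,
        nsmul_eq_mul, mul_one] at h2
      linarith
    -- piece 1
    have hb1 : |Pm s * ∑ k, (∑ i, σ s i k * w i) ^ 2 - Pm s * ∑ k, (∑ i, σ s i k * v i) ^ 2|
        ≤ 2 * CP * n * Cσ ^ 2 * R * D := by
      have hA : ∀ (u : Fin m → ℝ), (∑ i, |u i| ≤ R) → ∀ k, |∑ i, σ s i k * u i| ≤ Cσ * R :=
        fun u hu k => (abs_sum_mul_le' u _ Cσ (fun i => hCσ s hs i k)).trans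
          (mul_le_mul_of_nonneg_left hu hCσ0)
      have hAd : ∀ k : Fin n, |(∑ i, σ s i k * w i) - ∑ i, σ s i k * v i| ≤ Cσ * D := by
        intro k
        have he : (∑ i, σ s i k * w i) - ∑ i, σ s i k * v i = ∑ i, σ s i k * (w i - v i) := by
          rw [← Finset.sum_sub_distrib]
          exact Finset.sum_congr rfl fun i _ => (mul_sub _ _ _).symm
        rw [he, hDdef]
        exact abs_sum_mul_le' (fun i => w i - v i) _ Cσ (fun i => hCσ s hs i k)
      have hk : ∀ k : Fin n, |(∑ i, σ s i k * w i) ^ 2 - (∑ i, σ s i k * v i) ^ 2|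
          ≤ 2 * Cσ * R * (Cσ * D) := by
        intro k
        refine (sq_diff_le _ _).trans ?_
        have h1 := hA w hsumw k
        have h2 := hA v hsumv k
        have h3 := hAd k
        nlinarith [abs_nonneg ((∑ i, σ s i k * w i) - ∑ i, σ s i k * v i),
          abs_nonneg (∑ i, σ s i k * w i), abs_nonneg (∑ i, σ s i k * v i),
          mul_nonneg hCσ0 hD0]
      rw [← mul_sub, abs_mul, abs_of_nonneg (hpos s hs).2.le]
      have hsumk : |∑ k, ((∑ i, σ s i k * w i) ^ 2 - (∑ i, σ s i k * v i) ^ 2)|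
          ≤ n * (2 * Cσ * R * (Cσ * D)) := by
        refine (Finset.abs_sum_le_sum_abs _ _).trans ?_
        calc ∑ k, |(∑ i, σ s i k * w i) ^ 2 - (∑ i, σ s i k * v i) ^ 2|
            ≤ ∑ _k : Fin n, 2 * Cσ * R * (Cσ * D) := Finset.sum_le_sum fun k _ => hk k
          _ = n * (2 * Cσ * R * (Cσ * D)) := by
              rw [Finset.sum_const, Finset.card_univ, Fintype.card_fin, nsmul_eq_mul]
      have he2 : ∑ k, (∑ i, σ s i k * w i) ^ 2 - ∑ k, (∑ i, σ s i k * v i) ^ 2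
          = ∑ k, ((∑ i, σ s i k * w i) ^ 2 - (∑ i, σ s i k * v i) ^ 2) :=
        (Finset.sum_sub_distrib _ _).symm
      rw [he2]
      calc Pm s * |∑ k, ((∑ i, σ s i k * w i) ^ 2 - (∑ i, σ s i k * v i) ^ 2)|
          ≤ CP * (n * (2 * Cσ * R * (Cσ * D))) :=
            mul_le_mul (hPmCP s hs) hsumk (abs_nonneg _) hCP0
        _ = 2 * CP * n * Cσ ^ 2 * R * D := by ring
    -- piece 2
    have hb2 : |2 * Pm s * ∑ i, μ s i * w i - 2 * Pm s * ∑ i, μ s i * v i|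
        ≤ 2 * CP * Cμ * D := by
      rw [← mul_sub, abs_mul]
      have he : (∑ i, μ s i * w i) - ∑ i, μ s i * v i = ∑ i, μ s i * (w i - v i) := by
        rw [← Finset.sum_sub_distrib]
        exact Finset.sum_congr rfl fun i _ => (mul_sub _ _ _).symm
      rw [he]
      have h1 : |2 * Pm s| ≤ 2 * CP := by
        rw [abs_of_nonneg (by linarith [(hpos s hs).2] : (0:ℝ) ≤ 2 * Pm s)]
        linarith [hPmCP s hs]
      have h2 : |∑ i, μ s i * (w i - v i)| ≤ Cμ * D := hDdef ▸
        abs_sum_mul_le' (fun i => w i - v i) _ Cμ (fun i => hCμ s hs i)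
      calc |2 * Pm s| * |∑ i, μ s i * (w i - v i)| ≤ (2 * CP) * (Cμ * D) :=
            mul_le_mul h1 h2 (abs_nonneg _) (by positivity)
        _ = 2 * CP * Cμ * D := by ring
    -- piece 3
    have hb3 : |(∑ j, ∫ e, (Pm s * ((max (1 - ∑ i, w i * β j s e i) 0) ^ 2
              - 1 + 2 * ∑ i, w i * β j s e i)
            + Pp s * (max (-(1 - ∑ i, w i * β j s e i)) 0) ^ 2) ∂ν j)
          - ∑ j, ∫ e, (Pm s * ((max (1 - ∑ i, v i * β j s e i) 0) ^ 2
              - 1 + 2 * ∑ i, v i * β j s e i)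
            + Pp s * (max (-(1 - ∑ i, v i * β j s e i)) 0) ^ 2) ∂ν j|
        ≤ 2 * CP * (4 + 2 * Cβ * R) * Cβ * Sν * D := by
      rw [← Finset.sum_sub_distrib]
      refine (Finset.abs_sum_le_sum_abs _ _).trans ?_
      have hj : ∀ j : Fin ℓ, |(∫ e, (Pm s * ((max (1 - ∑ i, w i * β j s e i) 0) ^ 2
              - 1 + 2 * ∑ i, w i * β j s e i)
            + Pp s * (max (-(1 - ∑ i, w i * β j s e i)) 0) ^ 2) ∂ν j)
          - ∫ e, (Pm s * ((max (1 - ∑ i, v i * β j s e i) 0) ^ 2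
              - 1 + 2 * ∑ i, v i * β j s e i)
            + Pp s * (max (-(1 - ∑ i, v i * β j s e i)) 0) ^ 2) ∂ν j|
          ≤ (2 * CP * (4 + 2 * Cβ * R) * (Cβ * D)) * (ν j Set.univ).toReal := by
        intro j
        rw [← integral_sub (hFint j s hs w) (hFint j s hs v)]
        have hpt : ∀ e : E, ‖(Pm s * ((max (1 - ∑ i, w i * β j s e i) 0) ^ 2
              - 1 + 2 * ∑ i, w i * β j s e i)
            + Pp s * (max (-(1 - ∑ i, w i * β j s e i)) 0) ^ 2)
          - (Pm s * ((max (1 - ∑ i, v i * β j s e i) 0) ^ 2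
              - 1 + 2 * ∑ i, v i * β j s e i)
            + Pp s * (max (-(1 - ∑ i, v i * β j s e i)) 0) ^ 2)‖
            ≤ 2 * CP * (4 + 2 * Cβ * R) * (Cβ * D) := by
          intro e
          rw [Real.norm_eq_abs]
          refine (Fdiff_bound (Pm s) (Pp s) _ _ (hpos s hs).2.le (hpos s hs).1.le).trans ?_
          have hxw := hxbd j s hs w e
          have hxv := hxbd j s hs v e
          have hxw' : |∑ i, w i * β j s e i| ≤ Cβ * R :=
            hxw.trans (mul_le_mul_of_nonneg_left hsumw hCβ0)
          have hxv' : |∑ i, v i * β j s e i| ≤ Cβ * R :=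
            hxv.trans (mul_le_mul_of_nonneg_left hsumv hCβ0)
          have hxd : |(∑ i, w i * β j s e i) - ∑ i, v i * β j s e i| ≤ Cβ * D := by
            have he : (∑ i, w i * β j s e i) - ∑ i, v i * β j s e i
                = ∑ i, (w i - v i) * β j s e i := by
              rw [← Finset.sum_sub_distrib]
              exact Finset.sum_congr rfl fun i _ => (sub_mul _ _ _).symm
            rw [he, hDdef]
            exact abs_sum_mul_le (fun i => w i - v i) _ Cβ (fun i => hCβ j s hs e i)
          have hPQ : Pm s + Pp s ≤ 2 * CP := by linarith [hPmCP s hs, hPpCP s hs]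
          have hPQ0 : 0 ≤ Pm s + Pp s := by linarith [(hpos s hs).1, (hpos s hs).2]
          have h40 : (0:ℝ) ≤ 4 + |∑ i, w i * β j s e i| + |∑ i, v i * β j s e i| := by
            positivity
          have h4R : 4 + |∑ i, w i * β j s e i| + |∑ i, v i * β j s e i|
              ≤ 4 + 2 * Cβ * R := by linarith
          calc (Pm s + Pp s) * (4 + |∑ i, w i * β j s e i| + |∑ i, v i * β j s e i|)
                * |(∑ i, w i * β j s e i) - ∑ i, v i * β j s e i|
              ≤ (2 * CP) * (4 + 2 * Cβ * R) * (Cβ * D) := by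
                refine mul_le_mul (mul_le_mul hPQ h4R h40 (by positivity)) hxd
                  (abs_nonneg _) (by positivity)
            _ = 2 * CP * (4 + 2 * Cβ * R) * (Cβ * D) := by ring
        have hni := norm_integral_le_of_norm_le
          (integrable_const (2 * CP * (4 + 2 * Cβ * R) * (Cβ * D))) (ae_of_all (ν j) hpt)
        rw [integral_const, smul_eq_mul, Real.norm_eq_abs] at hni
        exact hni.trans (le_of_eq (mul_comm _ _))
      calc ∑ j, |(∫ e, (Pm s * ((max (1 - ∑ i, w i * β j s e i) 0) ^ 2
              - 1 + 2 * ∑ i, w i * β j s e i)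
            + Pp s * (max (-(1 - ∑ i, w i * β j s e i)) 0) ^ 2) ∂ν j)
          - ∫ e, (Pm s * ((max (1 - ∑ i, v i * β j s e i) 0) ^ 2
              - 1 + 2 * ∑ i, v i * β j s e i)
            + Pp s * (max (-(1 - ∑ i, v i * β j s e i)) 0) ^ 2) ∂ν j|
          ≤ ∑ j, (2 * CP * (4 + 2 * Cβ * R) * (Cβ * D)) * (ν j Set.univ).toReal :=
            Finset.sum_le_sum fun j _ => hj j
        _ = (2 * CP * (4 + 2 * Cβ * R) * (Cβ * D)) * Sν := by
            rw [← Finset.mul_sum, hSνdef]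
        _ = 2 * CP * (4 + 2 * Cβ * R) * Cβ * Sν * D := by ring
    -- combine
    have hdiff : |Hminus μ σ ν β s w (Pp s) (Pm s) - Hminus μ σ ν β s v (Pp s) (Pm s)|
        ≤ L * D := by
      simp only [Hminus]
      obtain ⟨X1, hX1⟩ : ∃ X1 : ℝ, X1 = Pm s * ∑ k, (∑ i, σ s i k * w i) ^ 2
          - Pm s * ∑ k, (∑ i, σ s i k * v i) ^ 2 := ⟨_, rfl⟩
      obtain ⟨X2, hX2⟩ : ∃ X2 : ℝ,
          X2 = 2 * Pm s * ∑ i, μ s i * w i - 2 * Pm s * ∑ i, μ s i * v i := ⟨_, rfl⟩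
      obtain ⟨X3, hX3⟩ : ∃ X3 : ℝ, X3 = (∑ j, ∫ e, (Pm s * ((max (1 - ∑ i, w i * β j s e i) 0) ^ 2
              - 1 + 2 * ∑ i, w i * β j s e i)
            + Pp s * (max (-(1 - ∑ i, w i * β j s e i)) 0) ^ 2) ∂ν j)
          - ∑ j, ∫ e, (Pm s * ((max (1 - ∑ i, v i * β j s e i) 0) ^ 2
              - 1 + 2 * ∑ i, v i * β j s e i)
            + Pp s * (max (-(1 - ∑ i, v i * β j s e i)) 0) ^ 2) ∂ν j := ⟨_, rfl⟩
      have he : (Pm s * ∑ k, (∑ i, σ s i k * w i) ^ 2 - 2 * Pm s * ∑ i, μ s i * w i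
            + ∑ j, ∫ e, (Pm s * ((max (1 - ∑ i, w i * β j s e i) 0) ^ 2
              - 1 + 2 * ∑ i, w i * β j s e i)
            + Pp s * (max (-(1 - ∑ i, w i * β j s e i)) 0) ^ 2) ∂ν j)
          - (Pm s * ∑ k, (∑ i, σ s i k * v i) ^ 2 - 2 * Pm s * ∑ i, μ s i * v i
            + ∑ j, ∫ e, (Pm s * ((max (1 - ∑ i, v i * β j s e i) 0) ^ 2
              - 1 + 2 * ∑ i, v i * β j s e i)
            + Pp s * (max (-(1 - ∑ i, v i * β j s e i)) 0) ^ 2) ∂ν j)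
          = X1 + -X2 + X3 := by rw [hX1, hX2, hX3]; ring
      rw [he]
      calc |X1 + -X2 + X3| ≤ |X1 + -X2| + |X3| := abs_add_le _ _
        _ ≤ |X1| + |X2| + |X3| := by
            have := abs_add_le X1 (-X2)
            rw [abs_neg] at this
            linarith
        _ ≤ L * D := by
            rw [hLdef, hX1, hX2, hX3]
            linarith [hb1, hb2, hb3]
    have hLD : L * D ≤ ε := by
      have h1 : L * D ≤ L * (m * θ) := mul_le_mul_of_nonneg_left hD hL0
      have h2 : θ ≤ ε / (L * m + 1) := hθdef ▸ min_le_right _ _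
      have h3 : L * (m * θ) ≤ L * m * (ε / (L * m + 1)) := by
        rw [← mul_assoc]
        exact mul_le_mul_of_nonneg_left h2 (by positivity)
      have h4 : L * m * (ε / (L * m + 1)) ≤ ε := by
        have he : L * m * (ε / (L * m + 1)) = (L * m * ε) / (L * m + 1) := by ring
        rw [he, div_le_iff₀ hLm1]
        nlinarith [mul_nonneg hL0 (Nat.cast_nonneg m : (0:ℝ) ≤ m), hε.le]
      linarith
    have hgoal : Hminus μ σ ν β s w (Pp s) (Pm s)
        ≤ Hminus μ σ ν β s v (Pp s) (Pm s) + ε := by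
      have := (le_abs_self (Hminus μ σ ν β s w (Pp s) (Pm s)
        - Hminus μ σ ν β s v (Pp s) (Pm s))).trans (hdiff.trans hLD)
      linarith
    rw [hwdef] at hgoal
    exact hgoal
  -- measurable versions of Pp, Pm on Ioc
  have hIocIcc : Ioc (0:ℝ) T ⊆ Icc 0 T := Ioc_subset_Icc_self
  have hPpae : AEMeasurable Pp (volume.restrict (Ioc 0 T)) :=
    (hPpc.aemeasurable measurableSet_Icc).mono_measure
      (Measure.restrict_mono hIocIcc le_rfl)
  have hPmae : AEMeasurable Pm (volume.restrict (Ioc 0 T)) :=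
    (hPmc.aemeasurable measurableSet_Icc).mono_measure
      (Measure.restrict_mono hIocIcc le_rfl)
  obtain ⟨Pp', hPp'm, hPp'⟩ := hPpae
  obtain ⟨Pm', hPm'm, hPm'⟩ := hPmae
  have hHqmeas : ∀ w : Fin m → ℝ, Measurable fun s => Hminus μ σ ν β s w (Pp' s) (Pm' s) := by
    intro w
    have hA : Measurable fun s => Pm' s * ∑ k, (∑ i, σ s i k * w i) ^ 2 :=
      hPm'm.mul (Finset.measurable_sum _ fun k _ =>
        (Finset.measurable_sum _ fun i _ => (hσmeas i k).mul_const (w i)).pow_const 2)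
    have hB : Measurable fun s => 2 * Pm' s * ∑ i, μ s i * w i :=
      (hPm'm.const_mul 2).mul (Finset.measurable_sum _ fun i _ =>
        ((measurable_pi_apply i).comp hμmeas).mul_const (w i))
    have hC : Measurable fun s => ∑ j, ∫ e, (Pm' s * ((max (1 - ∑ i, w i * β j s e i) 0) ^ 2
          - 1 + 2 * ∑ i, w i * β j s e i)
        + Pp' s * (max (-(1 - ∑ i, w i * β j s e i)) 0) ^ 2) ∂ν j := by
      refine Finset.measurable_sum _ fun j _ => ?_
      have hβp : ∀ i : Fin m, Measurable fun p : ℝ × E => β j p.1 p.2 i :=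
        fun i => (measurable_pi_apply i).comp (hβmeas j)
      have hxj : Measurable fun p : ℝ × E => ∑ i, w i * β j p.1 p.2 i :=
        Finset.measurable_sum _ fun i _ => ((hβp i).const_mul (w i))
      have hPm2 : Measurable fun p : ℝ × E => Pm' p.1 := hPm'm.comp measurable_fst
      have hPp2 : Measurable fun p : ℝ × E => Pp' p.1 := hPp'm.comp measurable_fst
      have hFj : Measurable fun p : ℝ × E =>
          Pm' p.1 * ((max (1 - ∑ i, w i * β j p.1 p.2 i) 0) ^ 2
            - 1 + 2 * ∑ i, w i * β j p.1 p.2 i)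
          + Pp' p.1 * (max (-(1 - ∑ i, w i * β j p.1 p.2 i)) 0) ^ 2 :=
        (hPm2.mul (((((measurable_const.sub hxj).max measurable_const).pow_const 2).sub
            measurable_const).add (hxj.const_mul 2))).add
          (hPp2.mul (((measurable_const.sub hxj).neg.max measurable_const).pow_const 2))
      exact (hFj.stronglyMeasurable.integral_prod_right').measurable
    simp only [Hminus]
    exact (hA.sub hB).add hC
  haveI hne : Nonempty {q : Fin m → ℚ // ∀ i, 0 ≤ q i} := ⟨⟨fun _ => 0, fun _ => le_rfl⟩⟩
  have hfi : ∀ s ∈ Icc (0:ℝ) T, HstarMinus μ σ ν β s (Pp s) (Pm s)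
      = ⨅ q : {q : Fin m → ℚ // ∀ i, 0 ≤ q i},
          Hminus μ σ ν β s (fun i => ((q.1 i : ℝ))) (Pp s) (Pm s) := by
    intro s hs
    have h := sInf_eq_iInf_rat (fun v => Hminus μ σ ν β s v (Pp s) (Pm s)) (-M)
      (fun v hv => hlow s hs v) (fun v hv ε hε => happrox s hs v hv ε hε)
    simpa only [HstarMinus] using h
  have hG : Measurable fun s => ⨅ q : {q : Fin m → ℚ // ∀ i, 0 ≤ q i},
      Hminus μ σ ν β s (fun i => ((q.1 i : ℝ))) (Pp' s) (Pm' s) :=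
    Measurable.iInf fun q => hHqmeas _
  have haeq : (fun s => HstarMinus μ σ ν β s (Pp s) (Pm s))
      =ᵐ[volume.restrict (Ioc 0 T)]
        (fun s => ⨅ q : {q : Fin m → ℚ // ∀ i, 0 ≤ q i},
          Hminus μ σ ν β s (fun i => ((q.1 i : ℝ))) (Pp' s) (Pm' s)) := by
    filter_upwards [hPp', hPm', ae_restrict_mem measurableSet_Ioc] with s h1 h2 hsI
    rw [hfi s (hIocIcc hsI), h1, h2]
  have hconst : IntegrableOn (fun _ : ℝ => M) (Ioc 0 T) volume :=
    integrableOn_const measure_Ioc_lt_top.ne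
  have hint : IntegrableOn (fun s => HstarMinus μ σ ν β s (Pp s) (Pm s)) (Ioc 0 T) volume := by
    refine hconst.mono' ((hG.aestronglyMeasurable).congr haeq.symm) ?_
    filter_upwards [ae_restrict_mem measurableSet_Ioc] with s hsI
    rw [Real.norm_eq_abs, abs_le]
    exact ⟨by linarith [hf_ge s (hIocIcc hsI)],
      (hf_le0 s (hIocIcc hsI)).trans hM0⟩
  -- feasibility gives a superlevel set of positive measure
  have hg0meas : Measurable fun s : ℝ => ∑ i, μ s i :=
    Finset.measurable_sum _ fun i _ => (measurable_pi_apply i).comp hμmeas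
  have hμii : ∀ i : Fin m, IntervalIntegrable (fun t => μ t i) volume 0 T := by
    intro i
    rw [intervalIntegrable_iff_integrableOn_Ioc_of_le hT.le]
    have hc : IntegrableOn (fun _ : ℝ => Cμ) (Ioc 0 T) volume :=
      integrableOn_const measure_Ioc_lt_top.ne
    refine hc.mono' ((measurable_pi_apply i).comp hμmeas).aestronglyMeasurable ?_
    filter_upwards [ae_restrict_mem measurableSet_Ioc] with t ht
    rw [Real.norm_eq_abs]
    exact hCμ t (hIocIcc ht) i
  have hfeas2 : 0 < ∫ s in Ioc (0:ℝ) T, (∑ i, μ s i) := by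
    have h1 : ∑ i, ∫ t in (0:ℝ)..T, μ t i = ∫ t in (0:ℝ)..T, ∑ i, μ t i :=
      (intervalIntegral.integral_finset_sum fun i _ => hμii i).symm
    rw [h1, intervalIntegral.integral_of_le hT.le] at hfeas
    exact hfeas
  obtain ⟨k, hk⟩ : ∃ k : ℕ, volume (Ioc 0 T ∩ {s : ℝ | 1/(k+1:ℝ) ≤ ∑ i, μ s i}) ≠ 0 := by
    by_contra hcon
    push_neg at hcon
    have hnull : volume (⋃ k : ℕ, Ioc 0 T ∩ {s : ℝ | 1/(k+1:ℝ) ≤ ∑ i, μ s i}) = 0 :=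
      measure_iUnion_null hcon
    have hae2 : ∀ᵐ s ∂(volume.restrict (Ioc (0:ℝ) T)), (∑ i, μ s i) ≤ 0 := by
      have h1 : ∀ᵐ s ∂(volume.restrict (Ioc (0:ℝ) T)),
          s ∉ ⋃ k : ℕ, Ioc 0 T ∩ {s : ℝ | 1/(k+1:ℝ) ≤ ∑ i, μ s i} :=
        ae_restrict_of_ae (measure_eq_zero_iff_ae_notMem.mp hnull)
      filter_upwards [h1, ae_restrict_mem measurableSet_Ioc] with s hs1 hs2
      by_contra hgt
      push_neg at hgt
      obtain ⟨k, hk2⟩ := exists_nat_one_div_lt hgt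
      exact hs1 (mem_iUnion.mpr ⟨k, hs2, hk2.le⟩)
    have h2 := integral_nonpos_of_ae hae2
    linarith
  obtain ⟨η, hηdef⟩ : ∃ η : ℝ, η = 1/(k+1:ℝ) := ⟨_, rfl⟩
  have hη0 : 0 < η := by rw [hηdef]; positivity
  obtain ⟨A, hAdef⟩ : ∃ A : Set ℝ, A = Ioc 0 T ∩ {s : ℝ | 1/(k+1:ℝ) ≤ ∑ i, μ s i} := ⟨_, rfl⟩
  have hAmeas : MeasurableSet A := by
    rw [hAdef]
    exact measurableSet_Ioc.inter (measurableSet_le measurable_const hg0meas)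
  have hAsub : A ⊆ Ioc 0 T := by rw [hAdef]; exact inter_subset_left
  have hAne : volume A ≠ 0 := by rw [hAdef]; exact hk
  have hAfin : volume A < ⊤ := lt_of_le_of_lt (measure_mono hAsub) measure_Ioc_lt_top
  have hAg : ∀ s ∈ A, η ≤ ∑ i, μ s i := by
    intro s hsA
    rw [hAdef] at hsA
    rw [hηdef]
    exact hsA.2
  -- choice of the constant vector
  obtain ⟨K, hKdef⟩ : ∃ K : ℝ,
      K = CP * n * (m * Cσ) ^ 2 + 2 * CP * (m * Cβ) ^ 2 * Sν + 1 := ⟨_, rfl⟩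
  have hK0 : 0 < K := by
    rw [hKdef]
    positivity
  obtain ⟨ε₀, hε₀def⟩ : ∃ ε₀ : ℝ, ε₀ = cP * η / K := ⟨_, rfl⟩
  have hε₀ : 0 < ε₀ := by rw [hε₀def]; positivity
  have hKε₀ : K * ε₀ = cP * η := by
    rw [hε₀def]
    field_simp
  have hK1 : CP * n * (m * Cσ) ^ 2 + 2 * CP * (m * Cβ) ^ 2 * Sν ≤ K := by
    rw [hKdef]; linarith
  -- upper bound for the Hamiltonian at the constant vector over A
  have hupA : ∀ s ∈ A, HstarMinus μ σ ν β s (Pp s) (Pm s) ≤ -(cP * η * ε₀) := by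
    intro s hsA
    have hs : s ∈ Icc (0:ℝ) T := hIocIcc (hAsub hsA)
    refine (hf_le s hs (fun _ => ε₀) (fun _ => hε₀.le)).trans ?_
    have habsε : ∑ i : Fin m, |(fun _ : Fin m => ε₀) i| = m * ε₀ := by
      simp [abs_of_nonneg hε₀.le, Finset.sum_const, Finset.card_univ, nsmul_eq_mul]
    -- term 1
    have ht1 : Pm s * ∑ k, (∑ i, σ s i k * (fun _ : Fin m => ε₀) i) ^ 2
        ≤ CP * (n * (Cσ * (m * ε₀)) ^ 2) := by
      have hk1 : ∀ k : Fin n, (∑ i, σ s i k * (fun _ : Fin m => ε₀) i) ^ 2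
          ≤ (Cσ * (m * ε₀)) ^ 2 := by
        intro k
        have h1 : |∑ i, σ s i k * (fun _ : Fin m => ε₀) i| ≤ Cσ * (m * ε₀) := by
          have := abs_sum_mul_le' (fun _ : Fin m => ε₀) (fun i => σ s i k) Cσ
            (fun i => hCσ s hs i k)
          rw [habsε] at this
          exact this
        calc (∑ i, σ s i k * (fun _ : Fin m => ε₀) i) ^ 2
            = |∑ i, σ s i k * (fun _ : Fin m => ε₀) i| ^ 2 := (sq_abs _).symm
          _ ≤ (Cσ * (m * ε₀)) ^ 2 := pow_le_pow_left₀ (abs_nonneg _) h1 2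
      have hsum : ∑ k, (∑ i, σ s i k * (fun _ : Fin m => ε₀) i) ^ 2
          ≤ n * (Cσ * (m * ε₀)) ^ 2 := by
        calc ∑ k, (∑ i, σ s i k * (fun _ : Fin m => ε₀) i) ^ 2
            ≤ ∑ _k : Fin n, (Cσ * (m * ε₀)) ^ 2 := Finset.sum_le_sum fun k _ => hk1 k
          _ = n * (Cσ * (m * ε₀)) ^ 2 := by
              rw [Finset.sum_const, Finset.card_univ, Fintype.card_fin, nsmul_eq_mul]
      exact mul_le_mul (hPmCP s hs) hsum
        (Finset.sum_nonneg fun k _ => sq_nonneg _) hCP0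
    -- term 2
    have ht2 : ∑ i, μ s i * (fun _ : Fin m => ε₀) i = (∑ i, μ s i) * ε₀ :=
      (Finset.sum_mul _ _ _).symm
    -- term 3
    have ht3 : ∑ j, ∫ e, (Pm s * ((max (1 - ∑ i, (fun _ : Fin m => ε₀) i * β j s e i) 0) ^ 2
          - 1 + 2 * ∑ i, (fun _ : Fin m => ε₀) i * β j s e i)
        + Pp s * (max (-(1 - ∑ i, (fun _ : Fin m => ε₀) i * β j s e i)) 0) ^ 2) ∂ν j
        ≤ 2 * CP * (Cβ * (m * ε₀)) ^ 2 * Sν := by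
      have hj : ∀ j : Fin ℓ, ∫ e, (Pm s * ((max (1 - ∑ i, (fun _ : Fin m => ε₀) i * β j s e i) 0) ^ 2
            - 1 + 2 * ∑ i, (fun _ : Fin m => ε₀) i * β j s e i)
          + Pp s * (max (-(1 - ∑ i, (fun _ : Fin m => ε₀) i * β j s e i)) 0) ^ 2) ∂ν j
          ≤ 2 * CP * (Cβ * (m * ε₀)) ^ 2 * (ν j Set.univ).toReal := by
        intro j
        have hpt : ∀ e : E, (Pm s * ((max (1 - ∑ i, (fun _ : Fin m => ε₀) i * β j s e i) 0) ^ 2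
              - 1 + 2 * ∑ i, (fun _ : Fin m => ε₀) i * β j s e i)
            + Pp s * (max (-(1 - ∑ i, (fun _ : Fin m => ε₀) i * β j s e i)) 0) ^ 2)
            ≤ 2 * CP * (Cβ * (m * ε₀)) ^ 2 := by
          intro e
          refine (integrand_le (Pm s) (Pp s) _ (hpos s hs).2.le (hpos s hs).1.le).trans ?_
          have hx : |∑ i, (fun _ : Fin m => ε₀) i * β j s e i| ≤ Cβ * (m * ε₀) := by
            have := hxbd j s hs (fun _ : Fin m => ε₀) e
            rw [habsε] at this
            exact this
          have hx2 : (∑ i, (fun _ : Fin m => ε₀) i * β j s e i) ^ 2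
              ≤ (Cβ * (m * ε₀)) ^ 2 := by
            calc (∑ i, (fun _ : Fin m => ε₀) i * β j s e i) ^ 2
                = |∑ i, (fun _ : Fin m => ε₀) i * β j s e i| ^ 2 := (sq_abs _).symm
              _ ≤ (Cβ * (m * ε₀)) ^ 2 := pow_le_pow_left₀ (abs_nonneg _) hx 2
          have hPQ : Pm s + Pp s ≤ 2 * CP := by linarith [hPmCP s hs, hPpCP s hs]
          have hPQ0 : 0 ≤ Pm s + Pp s := by linarith [(hpos s hs).1, (hpos s hs).2]
          calc (Pm s + Pp s) * (∑ i, (fun _ : Fin m => ε₀) i * β j s e i) ^ 2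
              ≤ (2 * CP) * (Cβ * (m * ε₀)) ^ 2 :=
                mul_le_mul hPQ hx2 (sq_nonneg _) (by positivity)
            _ = 2 * CP * (Cβ * (m * ε₀)) ^ 2 := by ring
        have h1 := integral_mono (hFint j s hs (fun _ : Fin m => ε₀))
          (integrable_const (2 * CP * (Cβ * (m * ε₀)) ^ 2)) hpt
        rw [integral_const, smul_eq_mul] at h1
        exact h1.trans (le_of_eq (mul_comm _ _))
      calc ∑ j, ∫ e, (Pm s * ((max (1 - ∑ i, (fun _ : Fin m => ε₀) i * β j s e i) 0) ^ 2
            - 1 + 2 * ∑ i, (fun _ : Fin m => ε₀) i * β j s e i)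
          + Pp s * (max (-(1 - ∑ i, (fun _ : Fin m => ε₀) i * β j s e i)) 0) ^ 2) ∂ν j
          ≤ ∑ j, 2 * CP * (Cβ * (m * ε₀)) ^ 2 * (ν j Set.univ).toReal :=
            Finset.sum_le_sum fun j _ => hj j
        _ = 2 * CP * (Cβ * (m * ε₀)) ^ 2 * Sν := by rw [← Finset.mul_sum, hSνdef]
    -- combine
    have hgη : cP * η ≤ Pm s * ∑ i, μ s i :=
      mul_le_mul (hcPm s hs) (hAg s hsA) hη0.le (hpos s hs).2.le
    have hgη2 : cP * η * ε₀ ≤ (Pm s * ∑ i, μ s i) * ε₀ :=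
      mul_le_mul_of_nonneg_right hgη hε₀.le
    have hK1' : CP * n * (m * Cσ) ^ 2 + 2 * CP * (m * Cβ) ^ 2 * Sν = K - 1 := by
      rw [hKdef]; ring
    have hconstsum : CP * (n * (Cσ * (m * ε₀)) ^ 2) + 2 * CP * (Cβ * (m * ε₀)) ^ 2 * Sν
        = (K - 1) * ε₀ ^ 2 := by
      have h1 : CP * (n * (Cσ * (m * ε₀)) ^ 2) + 2 * CP * (Cβ * (m * ε₀)) ^ 2 * Sν
          = (CP * n * (m * Cσ) ^ 2 + 2 * CP * (m * Cβ) ^ 2 * Sν) * ε₀ ^ 2 := by ring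
      rw [h1, hK1']
    have hc2 : (K - 1) * ε₀ ^ 2 = cP * η * ε₀ - ε₀ ^ 2 := by
      have h1 : (K - 1) * ε₀ ^ 2 = K * ε₀ * ε₀ - ε₀ ^ 2 := by ring
      rw [h1, hKε₀]
    simp only [Hminus]
    rw [ht2]
    linarith [ht1, ht3, hgη2, sq_nonneg ε₀]
  -- final computation
  have ha0 : 0 < cP * η * ε₀ := by positivity
  have hPm0 : Pm 0 = 1 + ∫ s in (0:ℝ)..T, HstarMinus μ σ ν β s (Pp s) (Pm s) := hPmeq 0 h0T
  have hlt : ∫ s in (0:ℝ)..T, HstarMinus μ σ ν β s (Pp s) (Pm s) < 0 := by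
    rw [intervalIntegral.integral_of_le hT.le]
    have hψint : IntegrableOn (A.indicator fun _ : ℝ => -(cP * η * ε₀)) (Ioc 0 T) volume := by
      rw [IntegrableOn, integrable_indicator_iff hAmeas]
      refine integrableOn_const (ne_of_lt ?_)
      rw [Measure.restrict_apply hAmeas]
      exact lt_of_le_of_lt (measure_mono inter_subset_right) measure_Ioc_lt_top
    have hmono : ∫ s in Ioc (0:ℝ) T, HstarMinus μ σ ν β s (Pp s) (Pm s)
        ≤ ∫ s in Ioc (0:ℝ) T, (A.indicator fun _ : ℝ => -(cP * η * ε₀)) s := by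
      refine setIntegral_mono_on hint hψint measurableSet_Ioc ?_
      intro s hsI
      by_cases hsA : s ∈ A
      · rw [indicator_of_mem hsA]
        exact hupA s hsA
      · rw [indicator_of_notMem hsA]
        exact hf_le0 s (hIocIcc hsI)
    have hψval : ∫ s in Ioc (0:ℝ) T, (A.indicator fun _ : ℝ => -(cP * η * ε₀)) s
        = -(cP * η * ε₀) * (volume A).toReal := by
      rw [integral_indicator hAmeas, Measure.restrict_restrict hAmeas,
        inter_eq_self_of_subset_left hAsub, integral_const, measureReal_restrict_apply_univ,
        smul_eq_mul, mul_comm, measureReal_def]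
    have htoR : 0 < (volume A).toReal := ENNReal.toReal_pos hAne hAfin.ne
    rw [hψval] at hmono
    exact lt_of_le_of_lt hmono (mul_neg_of_neg_of_pos (neg_lt_zero.mpr ha0) htoR)
  rw [hPm0]
  linarith
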